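/- For a ring R and n ≥ 2, if R is strongly nil-IFP then the ring U_n(R) of n×n upper triangular matrices over R is strongly nil-IFP. -/

import Mathlib

def StronglyNilIFP (R : Type*) [Ring R] : Prop :=
  ∀ f g : Polynomial R, f * g = 0 →
    ∀ i j : ℕ, ∀ r : R, IsNilpotent (f.coeff i * r * g.coeff j)

/-- The ring `U_n(R)` of upper triangular `n × n` matrices over `R`, as a subring
of the full matrix ring. -/
def upperTriangular (n : ℕ) (R : Type*) [Ring R] :
    Subring (Matrix (Fin n) (Fin n) R) where
  carrier := { M | ∀ i j : Fin n, j < i → M i j = 0 }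
  zero_mem' := by intro i j hij; rfl
  one_mem' := by
    intro i j hij
    simp [Matrix.one_apply, (ne_of_lt hij).symm]
  add_mem' := by
    intro M N hM hN i j hij
    simp [Matrix.add_apply, hM i j hij, hN i j hij]
  neg_mem' := by
    intro M hM i j hij
    simp [Matrix.neg_apply, hM i j hij]
  mul_mem' := by
    intro M N hM hN i j hij
    simp only [Matrix.mul_apply]
    apply Finset.sum_eq_zero
    intro k _
    rcases le_or_gt i k with hk | hk
    · rw [hN k j (lt_of_lt_of_le hij hk), mul_zero]
    · rw [hM i k hk, zero_mul]

-- strictly upper triangular matrix: N^n = 0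
theorem strict_pow (n : ℕ) (R : Type*) [Ring R] (N : Matrix (Fin n) (Fin n) R)
    (hN : ∀ i j : Fin n, (j : ℕ) ≤ i → N i j = 0) : N ^ n = 0 := by
  have key : ∀ k : ℕ, ∀ i j : Fin n, (j : ℕ) < i + k → (N ^ k) i j = 0 := by
    intro k
    induction k with
    | zero =>
      intro i j hij
      simp only [pow_zero]
      exact Matrix.one_apply_ne (fun e => by subst e; omega)
    | succ k ih =>
      intro i j hij
      rw [pow_succ']
      rw [Matrix.mul_apply]
      apply Finset.sum_eq_zero
      intro l _
      rcases le_or_gt (l : ℕ) i with hl | hl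
      · rw [hN i l hl, zero_mul]
      · rw [ih l j (by omega), mul_zero]
  ext i j
  simp [key n i j (by omega)]

def diagHom (n : ℕ) (R : Type*) [Ring R] (k : Fin n) :
    (upperTriangular n R) →+* R where
  toFun M := M.val k k
  map_one' := by simp
  map_zero' := rfl
  map_add' M N := rfl
  map_mul' M N := by
    show (M.val * N.val) k k = _
    rw [Matrix.mul_apply]
    rw [Finset.sum_eq_single k]
    · intro l _ hl
      rcases lt_or_gt_of_ne hl with h' | h'
      · rw [M.2 k l h', zero_mul]
      · rw [N.2 l k h', mul_zero]
    · intro hk; simp at hk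

theorem stronglyNilIFP_upperTriangular (R : Type*) [Ring R] (n : ℕ) (hn : 2 ≤ n)
    (h : StronglyNilIFP R) :
    StronglyNilIFP (upperTriangular n R) := by
  intro f g hfg i j r
  set c := f.coeff i * r * g.coeff j with hc
  have hdiag : ∀ k : Fin n, IsNilpotent (c.val k k) := by
    intro k
    have h0 : (f.map (diagHom n R k)) * (g.map (diagHom n R k)) = 0 := by
      rw [← Polynomial.map_mul, hfg, Polynomial.map_zero]
    have := h _ _ h0 i j (diagHom n R k r)
    rw [Polynomial.coeff_map, Polynomial.coeff_map, ← map_mul, ← map_mul] at this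
    exact this
  choose e he using hdiag
  set m := Finset.univ.sup e with hm
  have hme : ∀ k : Fin n, (c.val k k) ^ m = 0 := by
    intro k
    exact pow_eq_zero_of_le (Finset.le_sup (Finset.mem_univ k)) (he k)
  have hstrict : ∀ a b : Fin n, (b : ℕ) ≤ a → (c.val ^ m) a b = 0 := by
    intro a b hab
    rcases eq_or_lt_of_le hab with h' | h'
    · have hb : b = a := Fin.ext h'
      subst hb
      have hpow : (c ^ m).val = c.val ^ m := by
        exact SubmonoidClass.coe_pow c m
      have := map_pow (diagHom n R b) c m
      calc (c.val ^ m) b b = ((c ^ m).val) b b := by rw [hpow]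
        _ = (diagHom n R b) (c ^ m) := rfl
        _ = ((diagHom n R b) c) ^ m := map_pow _ _ _
        _ = 0 := hme b
    · have hpow : (c ^ m).val = c.val ^ m := SubmonoidClass.coe_pow c m
      rw [← hpow]
      exact (c ^ m).2 a b (by exact_mod_cast h')
  refine ⟨m * n, ?_⟩
  apply Subtype.ext
  rw [SubmonoidClass.coe_pow, pow_mul]
  exact strict_pow n R (c.val ^ m) hstrict
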